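/- arXiv:1811.03235 — 7 statements merged into one kernel-verified Lean document; each statement's English description precedes it below -/
import Mathlib

section
/- Let p be a prime, n ≥ 1 a natural number, k = pⁿ, and ω = exp(2πi/k). If q_0, q_1, …, q_{k−1} are nonnegative integers satisfying Σ_{j=0}^{k−1} q_j ω^j = 0, then Σ_{j=0}^{k−1} q_j ≡ 0 (mod p). -/
open Complex Finset

/-- Let `p` be prime, `n ≥ 1`, `k = pⁿ`, `ω = exp(2πi/k)`.
If nonnegative integers `q_0, …, q_{k-1}` satisfy `Σ q_j ω^j = 0`, then
`Σ q_j ≡ 0 (mod p)`. -/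
theorem sum_coeff_dvd_of_root_sum_zero (p : ℕ) (hp : p.Prime) (n : ℕ) (hn : 1 ≤ n)
    (k : ℕ) (hk : k = p ^ n)
    (ω : ℂ) (hω : ω = Complex.exp (2 * Real.pi * Complex.I / k))
    (q : Fin k → ℕ)
    (hsum : ∑ j : Fin k, (q j : ℂ) * ω ^ (j : ℕ) = 0) :
    (∑ j : Fin k, q j) % p = 0 := by
  have hk0 : k ≠ 0 := by
    subst hk; exact pow_ne_zero _ hp.pos.ne'
  have hprim : IsPrimitiveRoot ω k := by
    rw [hω]
    exact Complex.isPrimitiveRoot_exp k hk0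
  set f : Polynomial ℤ := ∑ j : Fin k, Polynomial.C (q j : ℤ) * Polynomial.X ^ (j : ℕ) with hf
  have haev : Polynomial.aeval ω f = 0 := by
    rw [hf, map_sum]
    simpa using hsum
  have hdvd : Polynomial.cyclotomic k ℤ ∣ f := by
    rw [Polynomial.cyclotomic_eq_minpoly hprim (Nat.pos_of_ne_zero hk0)]
    exact minpoly.isIntegrallyClosed_dvd (hprim.isIntegral (Nat.pos_of_ne_zero hk0)) haev
  obtain ⟨g, hg⟩ := hdvd
  have heval : (f.eval 1 : ℤ) = p * g.eval 1 := by
    have : Fact p.Prime := ⟨hp⟩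
    obtain ⟨m, rfl⟩ : ∃ m, n = m + 1 := ⟨n - 1, (Nat.succ_pred_eq_of_pos hn).symm⟩
    rw [hg, Polynomial.eval_mul, hk, Polynomial.eval_one_cyclotomic_prime_pow]
  have hf1 : f.eval 1 = (∑ j : Fin k, (q j : ℤ)) := by
    simp [hf, Polynomial.eval_finset_sum]
  have : (p : ℤ) ∣ (∑ j : Fin k, (q j : ℤ)) := ⟨g.eval 1, by rw [← hf1, heval]⟩
  have : p ∣ ∑ j : Fin k, q j := by
    rwa [← Nat.cast_sum, Int.natCast_dvd_natCast] at this
  omega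
end

section
/- Let p be a prime, n ≥ 1 a natural number, k = pⁿ, and ω = exp(2πi/k). If q_0, q_1, …, q_{k−1} are nonnegative integers and s ≥ 1 is an integer such that Σ_{j=0}^{k−1} q_j ω^j = k^s, then Σ_{j=0}^{k−1} q_j ≡ 0 (mod p). -/
open Complex Finset Polynomial

/-- Let `p` be prime, `n ≥ 1`, `k = pⁿ`, `ω = exp(2πi/k)`.
If nonnegative integers `q_0, …, q_{k-1}` and an integer `s ≥ 1` satisfy
`Σ q_j ω^j = k^s`, then `Σ q_j ≡ 0 (mod p)`. -/
theorem sum_coeff_dvd_of_root_sum_pow (p : ℕ) (hp : p.Prime) (n : ℕ) (hn : 1 ≤ n)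
    (k : ℕ) (hk : k = p ^ n)
    (ω : ℂ) (hω : ω = Complex.exp (2 * Real.pi * Complex.I / k))
    (q : Fin k → ℕ) (s : ℕ) (hs : 1 ≤ s)
    (hsum : ∑ j : Fin k, (q j : ℂ) * ω ^ (j : ℕ) = (k : ℂ) ^ s) :
    (∑ j : Fin k, q j) % p = 0 := by
  haveI : Fact p.Prime := ⟨hp⟩
  have hk0 : k ≠ 0 := by
    subst hk; exact pow_ne_zero _ hp.pos.ne'
  have hprim : IsPrimitiveRoot ω k := by
    rw [hω]
    exact Complex.isPrimitiveRoot_exp k hk0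
  -- the integer polynomial vanishing at ω
  set g : ℤ[X] := (∑ j : Fin k, C ((q j : ℤ)) * X ^ (j : ℕ)) - C ((k : ℤ) ^ s) with hg
  have haeval : aeval ω g = 0 := by
    simp only [hg, map_sub, map_sum, map_mul, map_pow, aeval_C, aeval_X]
    push_cast
    rw [hsum]
    ring
  have hmin : Polynomial.cyclotomic k ℚ = minpoly ℚ ω :=
    Polynomial.cyclotomic_eq_minpoly_rat hprim (Nat.pos_of_ne_zero hk0)
  have hdvdQ : Polynomial.cyclotomic k ℚ ∣ g.map (Int.castRingHom ℚ) := by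
    rw [hmin]
    apply minpoly.dvd
    rw [← algebraMap_int_eq, Polynomial.aeval_map_algebraMap]
    exact haeval
  have hdvdZ : Polynomial.cyclotomic k ℤ ∣ g := by
    rw [← Polynomial.map_dvd_map (Int.castRingHom ℚ) Int.cast_injective
      (Polynomial.cyclotomic.monic k ℤ)]
    rwa [Polynomial.map_cyclotomic]
  have hevdvd : Polynomial.eval 1 (Polynomial.cyclotomic k ℤ) ∣ Polynomial.eval 1 g :=
    map_dvd (Polynomial.evalRingHom (1 : ℤ)) hdvdZ
  have hev1 : Polynomial.eval 1 (Polynomial.cyclotomic k ℤ) = p := by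
    subst hk
    obtain ⟨m, rfl⟩ := Nat.exists_eq_add_of_le hn
    rw [add_comm]
    exact Polynomial.eval_one_cyclotomic_prime_pow m
  have hevg : Polynomial.eval 1 g = (∑ j : Fin k, (q j : ℤ)) - (k : ℤ) ^ s := by
    simp [hg, Polynomial.eval_finset_sum]
  have hpk : (p : ℤ) ∣ (k : ℤ) ^ s := by
    subst hk
    have h1 : (p : ℤ) ∣ (p ^ n : ℕ) := by
      exact_mod_cast dvd_pow_self p (Nat.one_le_iff_ne_zero.mp hn)
    exact h1.trans (dvd_pow_self _ (Nat.one_le_iff_ne_zero.mp hs))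
  have hdvdsum : (p : ℤ) ∣ (∑ j : Fin k, (q j : ℤ)) := by
    have := hevdvd
    rw [hev1, hevg] at this
    obtain ⟨c, hc⟩ := this
    obtain ⟨d, hd⟩ := hpk
    exact ⟨c + d, by linarith⟩
  have : (p : ℤ) ∣ ((∑ j : Fin k, q j : ℕ) : ℤ) := by
    push_cast
    exact hdvdsum
  have := Int.ofNat_dvd.mp this
  omega
end

section
/- Let p be a prime, n ≥ 1, and N = pⁿ + 1, and let A be the adjacency matrix of the complete graph K_N. Then for every t ≥ 1 it is not the case that all entries of A^t are divisible by p; that is, there exist vertices x, y with (A^t)_{x,y} ≢ 0 (mod p). -/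
open Matrix

/-- Let `p` be prime, `n ≥ 1`, `N = pⁿ + 1`, and `A` the
adjacency matrix of `K_N`. Then for every `t ≥ 1`, not all entries of `A^t`
are divisible by `p`. -/
theorem complete_graph_pow_not_all_dvd (p : ℕ) (hp : p.Prime) (n : ℕ) (hn : 1 ≤ n)
    (N : ℕ) (hN : N = p ^ n + 1)
    (A : Matrix (Fin N) (Fin N) ℤ)
    (hA : ∀ x y : Fin N, A x y = if x = y then 0 else 1)
    (t : ℕ) (ht : 1 ≤ t) :
    ∃ x y : Fin N, ¬ (p : ℤ) ∣ (A ^ t) x y := by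
  haveI : Fact p.Prime := ⟨hp⟩
  have hN2 : 2 ≤ p ^ n := by
    calc (2:ℕ) = 2 ^ 1 := rfl
    _ ≤ p ^ 1 := Nat.pow_le_pow_left hp.two_le 1
    _ ≤ p ^ n := Nat.pow_le_pow_right hp.pos hn
  have h2N : 2 ≤ N := by omega
  let x : Fin N := ⟨0, by omega⟩
  let y : Fin N := ⟨1, by omega⟩
  have hxy : x ≠ y := by simp [x, y, Fin.ext_iff]
  set B : Matrix (Fin N) (Fin N) (ZMod p) := A.map (Int.cast) with hBdef
  have hNp : (N : ZMod p) = 1 := by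
    rw [hN]
    push_cast
    simp [ZMod.natCast_self, zero_pow (by omega : n ≠ 0)]
  have hBent : ∀ i j : Fin N, B i j = if i = j then 0 else 1 := by
    intro i j
    simp only [hBdef, Matrix.map_apply, hA]
    split_ifs <;> simp
  have hB2 : B * B = -B := by
    ext i j
    rw [Matrix.mul_apply]
    have key : ∀ z, B i z * B z j
        = 1 - (if i = z then 1 else 0) - (if z = j then 1 else 0)
          + (if i = z then (1:ZMod p) else 0) * (if z = j then 1 else 0) := by
      intro z
      rw [hBent, hBent]
      by_cases h1 : i = z <;> by_cases h2 : z = j <;> simp [h1, h2]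
    rw [Finset.sum_congr rfl fun z _ => key z]
    simp only [Finset.sum_add_distrib, Finset.sum_sub_distrib, ite_mul, one_mul,
      zero_mul, Finset.sum_ite_eq, Finset.sum_ite_eq', Finset.mem_univ, if_true,
      Finset.sum_const, Finset.card_univ, Fintype.card_fin, nsmul_eq_mul, mul_one, hNp]
    rw [Matrix.neg_apply, hBent]
    by_cases h : i = j <;> simp [h]
  have hpow : ∀ s : ℕ, B ^ (s + 1) = (-1 : ZMod p) ^ s • B := by
    intro s
    induction s with
    | zero => simp
    | succ k ih =>
      rw [pow_succ, ih, Matrix.smul_mul, hB2]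
      rw [pow_succ]
      ext i j
      simp [mul_comm]
  refine ⟨x, y, fun hdvd => ?_⟩
  have hcast : ((A ^ t) x y : ZMod p) = 0 :=
    (ZMod.intCast_zmod_eq_zero_iff_dvd _ p).mpr hdvd
  have hmap : (B ^ t) x y = (((A ^ t) x y : ℤ) : ZMod p) := by
    have : B ^ t = (A ^ t).map (Int.cast) := by
      simp only [hBdef]
      rw [show (A.map (Int.cast : ℤ → ZMod p)) = (Int.castRingHom (ZMod p)).mapMatrix A from rfl]
      rw [← map_pow]
      rfl
    rw [this, Matrix.map_apply]
  obtain ⟨s, rfl⟩ : ∃ s, t = s + 1 := ⟨t - 1, by omega⟩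
  rw [hpow s] at hmap
  have : ((-1 : ZMod p) ^ s • B) x y = 0 := by rw [hmap, hcast]
  rw [Matrix.smul_apply, hBent, if_neg hxy, smul_eq_mul, mul_one] at this
  exact ((isUnit_one.neg).pow s).ne_zero this
end

section
/- Let N > 2 and let A be the adjacency matrix of the cycle graph C_N^(l) with self-loops, with rows and columns indexed by ℤ/Nℤ. Define a_i^(t) = (A^t)_{i,0} mod 3 ∈ ℤ/3ℤ for i ∈ ℤ/Nℤ. If there exist m ≥ 0 and t ≥ 1 such that a_{i+3^m}^(t) = a_i^(t) for all i ∈ ℤ/Nℤ, then a_{i+3^{m+1}}^(t−1) = a_i^(t−1) for all i ∈ ℤ/Nℤ. -/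
open Matrix

/-- The discrete difference operator on functions `ZMod N → ZMod 3`. -/
private def Dop (N : ℕ) : (ZMod N → ZMod 3) → (ZMod N → ZMod 3) :=
  fun g i => g (i + 1) - g i

private lemma Dop_zero (N : ℕ) : Dop N 0 = 0 := by
  funext i; simp [Dop]

private lemma Dop_iter_zero (N k : ℕ) : (Dop N)^[k] 0 = 0 := by
  induction k with
  | zero => rfl
  | succ k ih => rw [Function.iterate_succ_apply, Dop_zero, ih]

private lemma Dop_pow3 (N : ℕ) (k : ℕ) (g : ZMod N → ZMod 3) (i : ZMod N) :
    (Dop N)^[3 ^ k] g i = g (i + (3 : ZMod N) ^ k) - g i := by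
  have h30 : (3 : ZMod 3) = 0 := by decide
  induction k generalizing g i with
  | zero =>
    simp [Dop]
  | succ k ih =>
    rw [pow_succ, Function.iterate_mul]
    have h3 : ((Dop N)^[3 ^ k])^[3] g i
        = (Dop N)^[3 ^ k] ((Dop N)^[3 ^ k] ((Dop N)^[3 ^ k] g)) i := rfl
    rw [h3]
    simp only [ih]
    set c := (3 : ZMod N) ^ k with hc
    have e1 : i + c + c + c = i + c ^ (1 : ℕ) * 3 := by ring
    have e2 : (3 : ZMod N) ^ (k + 1) = c ^ (1 : ℕ) * 3 := by rw [hc]; ring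
    rw [e2, ← e1]
    linear_combination (g (i + c) - g (i + c + c)) * h30

/-- Let `N > 2` and `A` be the adjacency matrix of the cycle
graph with self-loops `C_N^(l)`, indexed by `ℤ/Nℤ`. Let
`a_i^(t) = (A^t)_{i,0} mod 3`. If there exist `m ≥ 0` and `t ≥ 1` with
`a_{i+3^m}^(t) = a_i^(t)` for all `i`, then `a_{i+3^{m+1}}^(t−1) = a_i^(t−1)`
for all `i`. -/
theorem cycle_selfloop_period_descend (N : ℕ) [NeZero N] (hN : 2 < N)
    (A : Matrix (ZMod N) (ZMod N) ℤ)
    (hA : ∀ x y : ZMod N,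
      A x y = if y = x - 1 ∨ y = x ∨ y = x + 1 then 1 else 0)
    (a : ℕ → ZMod N → ZMod 3)
    (ha : ∀ t : ℕ, ∀ i : ZMod N, a t i = (((A ^ t) i 0 : ℤ) : ZMod 3))
    (m t : ℕ) (ht : 1 ≤ t)
    (hper : ∀ i : ZMod N, a t (i + (3 : ZMod N) ^ m) = a t i) :
    ∀ i : ZMod N, a (t - 1) (i + (3 : ZMod N) ^ (m + 1)) = a (t - 1) i := by
  have h30 : (3 : ZMod 3) = 0 := by decide
  obtain ⟨t', rfl⟩ : ∃ t', t = t' + 1 := ⟨t - 1, (Nat.succ_pred_eq_of_pos ht).symm⟩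
  have ht1 : t' + 1 - 1 = t' := rfl
  set f : ZMod N → ZMod 3 := a t' with hf
  -- basic nonvanishing facts
  have h1ne : (1 : ZMod N) ≠ 0 := by
    intro h
    have : ((1 : ℕ) : ZMod N) = 0 := by exact_mod_cast h
    have := (ZMod.natCast_eq_zero_iff 1 N).mp this
    have := Nat.le_of_dvd one_pos this
    omega
  have h2ne : (2 : ZMod N) ≠ 0 := by
    intro h
    have : ((2 : ℕ) : ZMod N) = 0 := by exact_mod_cast h
    have := (ZMod.natCast_eq_zero_iff 2 N).mp this
    have := Nat.le_of_dvd two_pos this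
    omega
  -- the recursion for a
  have hstep : ∀ i : ZMod N, a (t' + 1) i = f (i - 1) + f i + f (i + 1) := by
    intro i
    have hsum : (A ^ (t' + 1)) i 0
        = (A ^ t') (i - 1) 0 + (A ^ t') i 0 + (A ^ t') (i + 1) 0 := by
      have : A ^ (t' + 1) = A * A ^ t' := by rw [pow_succ']
      rw [this, Matrix.mul_apply]
      have hcond : ∀ j : ZMod N, A i j * (A ^ t') j 0
          = if j ∈ ({i - 1, i, i + 1} : Finset (ZMod N)) then (A ^ t') j 0 else 0 := by
        intro j
        rw [hA]
        by_cases h : j = i - 1 ∨ j = i ∨ j = i + 1 <;> simp [h]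
      rw [Finset.sum_congr rfl (fun j _ => hcond j), Finset.sum_ite_mem,
        Finset.univ_inter]
      have hne1 : (i - 1 : ZMod N) ∉ ({i, i + 1} : Finset (ZMod N)) := by
        simp only [Finset.mem_insert, Finset.mem_singleton]
        push_neg
        constructor
        · intro h; apply h1ne
          have : i - (i - 1) = 0 := by rw [h]; ring
          calc (1 : ZMod N) = i - (i - 1) := by ring
            _ = 0 := this
        · intro h; apply h2ne
          have : (i + 1) - (i - 1) = 0 := by rw [← h]; ring
          calc (2 : ZMod N) = (i + 1) - (i - 1) := by ring
            _ = 0 := this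
      have hne2 : (i : ZMod N) ∉ ({i + 1} : Finset (ZMod N)) := by
        simp only [Finset.mem_singleton]
        intro h; apply h1ne
        have : i + 1 - i = 0 := by rw [← h]; ring
        calc (1 : ZMod N) = i + 1 - i := by ring
          _ = 0 := this
      rw [Finset.sum_insert hne1, Finset.sum_insert hne2, Finset.sum_singleton]
      ring
    rw [ha, hsum]
    push_cast
    rw [← ha, ← ha, ← ha, ← hf]
  -- express a (t'+1) via Dop^2
  have hD2 : ∀ i : ZMod N, a (t' + 1) i = (Dop N)^[2] f (i - 1) := by
    intro i
    have : (Dop N)^[2] f (i - 1)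
        = f (i - 1 + 1 + 1) - f (i - 1 + 1) - (f (i - 1 + 1) - f (i - 1)) := rfl
    rw [this]
    have e1 : i - 1 + 1 = i := by ring
    have e2 : i - 1 + 1 + 1 = i + 1 := by ring
    rw [e2, e1, hstep]
    linear_combination (f i) * h30
  -- periodicity of Dop^2 f
  set c : ZMod N := (3 : ZMod N) ^ m with hcc
  have hh : ∀ j : ZMod N, (Dop N)^[2] f (j + c) = (Dop N)^[2] f j := by
    intro j
    have := hper (j + 1)
    rw [hD2, hD2] at this
    have e1 : j + 1 + c - 1 = j + c := by ring
    have e2 : j + 1 - 1 = j := by ring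
    rw [e1, e2] at this
    exact this
  have hDzero : (Dop N)^[3 ^ m + 2] f = 0 := by
    funext j
    rw [Function.iterate_add_apply, Dop_pow3]
    rw [← hcc, hh, sub_self]
    rfl
  -- conclude
  intro i
  have hle : 3 ^ m + 2 ≤ 3 ^ (m + 1) := by
    have h1 : 1 ≤ 3 ^ m := Nat.one_le_pow _ _ (by norm_num)
    have h2 : 3 ^ (m + 1) = 3 ^ m * 3 := pow_succ 3 m
    omega
  have hfin : (Dop N)^[3 ^ (m + 1)] f i = 0 := by
    have hk : 3 ^ (m + 1) = (3 ^ (m + 1) - (3 ^ m + 2)) + (3 ^ m + 2) := by omega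
    rw [hk, Function.iterate_add_apply, hDzero, Dop_iter_zero]
    rfl
  rw [Dop_pow3] at hfin
  rw [ht1]
  exact sub_eq_zero.mp hfin
end

section
/- Let N > 2 and let A be the adjacency matrix of the cycle graph C_N^(l) with self-loops, with rows and columns indexed by ℤ/Nℤ, and set a_i^(t) = (A^t)_{i,0} mod 3 ∈ ℤ/3ℤ. Suppose m ≥ 1 and t ≥ 1 are such that a_{i+3^m}^(t) = a_i^(t) for all i ∈ ℤ/Nℤ. Then for every i ∈ ℤ/Nℤ, the sum Σ_{j=0}^{3^m−1} (a_{i+1+3j}^(t) − a_{i+3j}^(t)) ≡ 0 (mod 3). -/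
open Matrix Finset

/-- Let `N > 2` and `A` be the adjacency matrix of the cycle
graph with self-loops `C_N^(l)`, indexed by `ℤ/Nℤ`, with
`a_i^(t) = (A^t)_{i,0} mod 3`. If `m ≥ 1`, `t ≥ 1` and
`a_{i+3^m}^(t) = a_i^(t)` for all `i`, then for every `i`,
`Σ_{j=0}^{3^m−1} (a_{i+1+3j}^(t) − a_{i+3j}^(t)) ≡ 0 (mod 3)`. -/
theorem cycle_selfloop_telescoping_sum (N : ℕ) [NeZero N] (hN : 2 < N)
    (A : Matrix (ZMod N) (ZMod N) ℤ)
    (hA : ∀ x y : ZMod N,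
      A x y = if y = x - 1 ∨ y = x ∨ y = x + 1 then 1 else 0)
    (a : ℕ → ZMod N → ZMod 3)
    (ha : ∀ t : ℕ, ∀ i : ZMod N, a t i = (((A ^ t) i 0 : ℤ) : ZMod 3))
    (m t : ℕ) (hm : 1 ≤ m) (ht : 1 ≤ t)
    (hper : ∀ i : ZMod N, a t (i + (3 : ZMod N) ^ m) = a t i) :
    ∀ i : ZMod N,
      ∑ j ∈ Finset.range (3 ^ m),
        (a t (i + 1 + 3 * (j : ZMod N)) - a t (i + 3 * (j : ZMod N))) = 0 := by
  intro i
  obtain ⟨m', rfl⟩ : ∃ m', m = m' + 1 := ⟨m - 1, (Nat.succ_pred_eq_of_pos hm).symm⟩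
  have key : ∀ c : ZMod N,
      ∑ j ∈ Finset.range (3 ^ (m' + 1)), a t (c + 3 * (j : ZMod N)) = 0 := by
    intro c
    have shift : ∀ j : ℕ, a t (c + 3 * ((3 ^ m' + j : ℕ) : ZMod N))
        = a t (c + 3 * (j : ZMod N)) := by
      intro j
      have harg : (c + 3 * ((3 ^ m' + j : ℕ) : ZMod N))
          = (c + 3 * (j : ZMod N)) + (3 : ZMod N) ^ (m' + 1) := by
        push_cast; ring
      rw [harg, hper]
    have h3 : 3 ^ (m' + 1) = 3 ^ m' + (3 ^ m' + 3 ^ m') := by ring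
    rw [h3, Finset.sum_range_add, Finset.sum_range_add]
    have e1 : ∀ j ∈ Finset.range (3 ^ m'),
        a t (c + 3 * ((3 ^ m' + j : ℕ) : ZMod N)) = a t (c + 3 * (j : ZMod N)) :=
      fun j _ => shift j
    have e2 : ∀ j ∈ Finset.range (3 ^ m'),
        a t (c + 3 * ((3 ^ m' + (3 ^ m' + j) : ℕ) : ZMod N))
          = a t (c + 3 * (j : ZMod N)) := by
      intro j _
      rw [shift (3 ^ m' + j), shift j]
    rw [Finset.sum_congr rfl e1, Finset.sum_congr rfl e2]
    have : ∑ j ∈ Finset.range (3 ^ m'), a t (c + 3 * (j : ZMod N))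
        + (∑ j ∈ Finset.range (3 ^ m'), a t (c + 3 * (j : ZMod N))
        + ∑ j ∈ Finset.range (3 ^ m'), a t (c + 3 * (j : ZMod N)))
        = 3 * ∑ j ∈ Finset.range (3 ^ m'), a t (c + 3 * (j : ZMod N)) := by ring
    rw [this]
    simp [show (3 : ZMod 3) = 0 from rfl]
  rw [Finset.sum_sub_distrib, key (i + 1), key i, sub_zero]
end

section
/- Let N > 2 and let A be the adjacency matrix of the cycle graph C_N^(l) with self-loops, with rows and columns indexed by ℤ/Nℤ. If there exists T ≥ 1 such that (A^T)_{i,0} ≡ 0 (mod 3) for every i ∈ ℤ/Nℤ, then N is a power of 3; equivalently, if N is not a power of 3 then for every T ≥ 1 there exists i ∈ ℤ/Nℤ with (A^T)_{i,0} ≢ 0 (mod 3). -/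
open Matrix

/-- Let `N > 2` and `A` be the adjacency matrix of the cycle
graph with self-loops `C_N^(l)`, indexed by `ℤ/Nℤ`. If there exists `T ≥ 1`
with `(A^T)_{i,0} ≡ 0 (mod 3)` for every `i`, then `N` is a power of `3`. -/
theorem cycle_selfloop_pow_dvd_three (N : ℕ) [NeZero N] (hN : 2 < N)
    (A : Matrix (ZMod N) (ZMod N) ℤ)
    (hA : ∀ x y : ZMod N,
      A x y = if y = x - 1 ∨ y = x ∨ y = x + 1 then 1 else 0)
    (T : ℕ) (hT : 1 ≤ T)
    (hdvd : ∀ i : ZMod N, (3 : ℤ) ∣ (A ^ T) i 0) :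
    ∃ n : ℕ, N = 3 ^ n := by
  classical
  haveI : Fact (Nat.Prime 3) := ⟨by norm_num⟩
  have h1 : (1 : ZMod N) ≠ 0 := by
    intro h
    have h' : ((1 : ℕ) : ZMod N) = 0 := by exact_mod_cast h
    rw [ZMod.natCast_eq_zero_iff] at h'
    have := Nat.le_of_dvd one_pos h'
    omega
  have h2 : (1 : ZMod N) + 1 ≠ 0 := by
    intro h
    have h' : ((2 : ℕ) : ZMod N) = 0 := by push_cast; linear_combination h
    rw [ZMod.natCast_eq_zero_iff] at h'
    have := Nat.le_of_dvd two_pos h'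
    omega
  -- the reduction of A mod 3
  set B : Matrix (ZMod N) (ZMod N) (ZMod 3) :=
    (Int.castRingHom (ZMod 3)).mapMatrix A with hBdef
  -- the shift matrix
  set S : Matrix (ZMod N) (ZMod N) (ZMod 3) :=
    Matrix.of (fun x y => if x = y + 1 then 1 else 0) with hSdef
  have hSapp : ∀ x y : ZMod N, S x y = if x = y + 1 then 1 else 0 := fun x y => rfl
  have hBapp : ∀ x y : ZMod N,
      B x y = if y = x - 1 ∨ y = x ∨ y = x + 1 then 1 else 0 := by
    intro x y
    simp only [hBdef, RingHom.mapMatrix_apply, Matrix.map_apply, hA]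
    split_ifs <;> simp
  -- multiplication by S on the right and left
  have hmulS : ∀ (M : Matrix (ZMod N) (ZMod N) (ZMod 3)) (x y : ZMod N),
      (M * S) x y = M x (y + 1) := by
    intro M x y
    rw [Matrix.mul_apply]
    have : ∀ z : ZMod N, M x z * S z y = if z = y + 1 then M x z else 0 := by
      intro z; rw [hSapp]; split_ifs <;> simp
    simp only [this]
    simp
  have hSmul : ∀ (M : Matrix (ZMod N) (ZMod N) (ZMod 3)) (x y : ZMod N),
      (S * M) x y = M (x - 1) y := by
    intro M x y
    rw [Matrix.mul_apply]
    have : ∀ z : ZMod N, S x z * M z y = if z = x - 1 then M z y else 0 := by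
      intro z; rw [hSapp]
      by_cases h : z = x - 1
      · subst h; simp
      · have h' : x ≠ z + 1 := by
          intro hx; apply h; rw [hx]; ring
        simp [h, h']
    simp only [this]
    simp
  -- B commutes with S
  have hcomm : Commute B S := by
    show B * S = S * B
    ext x y
    rw [hmulS, hSmul, hBapp, hBapp]
    refine if_congr ?_ rfl rfl
    constructor
    · rintro (h | h | h)
      · left; linear_combination h
      · right; left; linear_combination h
      · right; right; linear_combination h
    · rintro (h | h | h)
      · left; linear_combination h
      · right; left; linear_combination h
      · right; right; linear_combination h
  -- B * S = 1 + S + S^2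
  have hBS : B * S = 1 + S + S * S := by
    ext x y
    rw [hmulS, hBapp]
    have e1 : (y + 1 = x - 1 ∨ y + 1 = x ∨ y + 1 = x + 1) ↔
        (x = y ∨ x = y + 1 ∨ x = y + 1 + 1) := by
      constructor
      · rintro (h | h | h)
        · right; right; linear_combination -h
        · right; left; linear_combination -h
        · left; linear_combination -h
      · rintro (h | h | h)
        · right; right; linear_combination -h
        · right; left; linear_combination -h
        · left; linear_combination -h
    rw [if_congr e1 rfl rfl]
    have : (1 + S + S * S) x y =
        (if x = y then (1 : ZMod 3) else 0) + (if x = y + 1 then 1 else 0)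
          + (if x = y + 1 + 1 then 1 else 0) := by
      simp only [Matrix.add_apply, Matrix.one_apply, hSapp, hmulS]
    rw [this]
    have hpq : x = y → x ≠ y + 1 := by
      rintro rfl h; exact h1 (by linear_combination -h)
    have hpr : x = y → x ≠ y + 1 + 1 := by
      rintro rfl h; exact h2 (by linear_combination -h)
    have hqr : x = y + 1 → x ≠ y + 1 + 1 := by
      rintro rfl h; exact h1 (by linear_combination -h)
    by_cases p : x = y <;> by_cases q : x = y + 1 <;> by_cases r : x = y + 1 + 1 <;>
      simp_all
  -- hence B * S = (S - 1)^2 in characteristic 3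
  have hchar3 : (1 : ZMod 3) + 1 + 1 = 0 := by
    have h := ZMod.natCast_self 3
    push_cast at h
    linear_combination h
  have hsq : (S - 1) ^ 2 = 1 + S + S * S := by
    have expand : (S - 1) ^ 2 = S * S - S - S + 1 := by noncomm_ring
    rw [expand]
    have h3S : S + S + S = 0 := by
      have : S + S + S = ((1 : ZMod 3) + 1 + 1) • S := by
        rw [add_smul, add_smul, one_smul]
      rw [this, hchar3, zero_smul]
    have h0 : S * S - S - S + 1 - (1 + S + S * S) = 0 := by
      have : S * S - S - S + 1 - (1 + S + S * S) = -(S + S + S) := by noncomm_ring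
      rw [this, h3S, neg_zero]
    exact sub_eq_zero.mp h0
  -- powers of S
  have hSpow : ∀ (k : ℕ) (x y : ZMod N),
      (S ^ k) x y = if x = y + (k : ZMod N) then 1 else 0 := by
    intro k
    induction k with
    | zero => intro x y; simp [Matrix.one_apply, eq_comm]
    | succ n ih =>
        intro x y
        rw [pow_succ, hmulS, ih]
        push_cast
        refine if_congr ?_ rfl rfl
        constructor <;> intro h <;> linear_combination h
  -- the 0-column of B^T vanishes mod 3
  have hcol : ∀ i : ZMod N, (B ^ T) i 0 = 0 := by
    intro i
    have : B ^ T = (Int.castRingHom (ZMod 3)).mapMatrix (A ^ T) := by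
      rw [hBdef, map_pow]
    rw [this]
    simp only [RingHom.mapMatrix_apply, Matrix.map_apply]
    exact (ZMod.intCast_zmod_eq_zero_iff_dvd _ 3).mpr (by exact_mod_cast hdvd i)
  -- hence B^T = 0 (using that B^T commutes with powers of S)
  have hBT : B ^ T = 0 := by
    ext x y
    obtain ⟨k, rfl⟩ := ZMod.natCast_zmod_surjective (n := N) y
    have hc : B ^ T * S ^ k = S ^ k * B ^ T := (hcomm.pow_pow T k)
    have hL : (B ^ T * S ^ k) x 0 = (B ^ T) x (0 + (k : ZMod N)) := by
      rw [Matrix.mul_apply]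
      have : ∀ z : ZMod N, (B ^ T) x z * (S ^ k) z 0 =
          if z = 0 + (k : ZMod N) then (B ^ T) x z else 0 := by
        intro z; rw [hSpow]; split_ifs <;> simp
      simp only [this]; simp
    have hR : (S ^ k * B ^ T) x 0 = 0 := by
      rw [Matrix.mul_apply]
      have : ∀ z : ZMod N, (S ^ k) x z * (B ^ T) z 0 = 0 := by
        intro z; rw [hcol z, mul_zero]
      simp [this]
    have : (B ^ T) x (0 + (k : ZMod N)) = 0 := by rw [← hL, hc, hR]
    simpa using this
  -- hence (S - 1)^(2T) = 0
  have hnil : (S - 1) ^ (2 * T) = 0 := by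
    have : (S - 1) ^ (2 * T) = ((S - 1) ^ 2) ^ T := by rw [← pow_mul]
    rw [this, hsq, ← hBS, hcomm.mul_pow, hBT, zero_mul]
  -- Frobenius: (S - 1)^(3^(2T)) = S^(3^(2T)) - 1
  haveI : Nonempty (ZMod N) := ⟨0⟩
  have hfrob : (S - 1) ^ (3 ^ (2 * T)) = S ^ (3 ^ (2 * T)) - 1 := by
    have := sub_pow_char_pow_of_commute (p := 3) (n := 2 * T)
      (x := S) (y := (1 : Matrix (ZMod N) (ZMod N) (ZMod 3))) (Commute.one_right S)
    simpa using this
  have hle : 2 * T ≤ 3 ^ (2 * T) := le_of_lt (Nat.lt_pow_self (by norm_num))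
  have hzero : (S - 1) ^ (3 ^ (2 * T)) = 0 := by
    rw [← Nat.sub_add_cancel hle, pow_add, hnil, mul_zero]
  have hSone : S ^ (3 ^ (2 * T)) = 1 := by
    have h0 := hzero
    rw [hfrob] at h0
    exact sub_eq_zero.mp h0
  -- conclude N ∣ 3^(2T)
  have hdvdN : ((3 ^ (2 * T) : ℕ) : ZMod N) = 0 := by
    have h := congrFun (congrFun hSone ((3 ^ (2 * T) : ℕ) : ZMod N)) 0
    rw [hSpow, Matrix.one_apply] at h
    simp only [zero_add, if_pos rfl] at h
    by_contra hne
    rw [if_neg hne] at h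
    exact one_ne_zero h
  rw [ZMod.natCast_eq_zero_iff] at hdvdN
  obtain ⟨n, _, rfl⟩ := (Nat.dvd_prime_pow (by norm_num)).mp hdvdN
  exact ⟨n, rfl⟩
end

section
/- Let p be an odd prime, n ≥ 1, and d = pⁿ, and let A be the adjacency matrix of the hypercube Q_d. Then for every T ≥ 1 it is not the case that all entries of A^T are divisible by d; that is, there exist vertices x, y ∈ {0,1}^d with (A^T)_{x,y} ≢ 0 (mod d). -/
open Matrix Finset

section Aux

variable {d : ℕ}

/-- Flip coordinate `i` of a hypercube vertex. -/
def flipv (x : Fin d → Fin 2) (i : Fin d) : Fin d → Fin 2 :=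
  Function.update x i (x i + 1)

lemma fin2_add_one_ne (a : Fin 2) : a + 1 ≠ a := by revert a; decide

lemma fin2_ne_eq_add_one (a b : Fin 2) (h : a ≠ b) : b = a + 1 := by
  revert h; revert a b; decide

lemma fin2_neg_one_pow_add_one (a : Fin 2) :
    ((-1 : ℤ)) ^ ((a + 1 : Fin 2) : ℕ) = -((-1 : ℤ)) ^ (a : ℕ) := by
  revert a; decide

lemma diff_flipv (x : Fin d → Fin 2) (i : Fin d) :
    (Finset.univ.filter fun k => x k ≠ flipv x i k) = {i} := by
  ext k
  simp only [mem_filter, mem_univ, true_and, mem_singleton]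
  simp only [flipv]
  constructor
  · intro h
    by_contra hk
    rw [Function.update_of_ne hk] at h
    exact h rfl
  · rintro rfl
    rw [Function.update_self]
    exact fun h => fin2_add_one_ne (x k) h.symm

lemma A_entry_eq_sum (x y : Fin d → Fin 2) :
    (if (Finset.univ.filter fun i => x i ≠ y i).card = 1 then (1 : ℤ) else 0)
      = ∑ i : Fin d, if y = flipv x i then (1 : ℤ) else 0 := by
  rw [Finset.sum_boole]
  by_cases h : (Finset.univ.filter fun i => x i ≠ y i).card = 1
  · obtain ⟨i, hi⟩ := Finset.card_eq_one.mp h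
    have hfil : (Finset.univ.filter fun j => y = flipv x j) = {i} := by
      ext j
      simp only [mem_filter, mem_univ, true_and, mem_singleton]
      constructor
      · intro hj
        have := diff_flipv x j
        rw [← hj] at this
        rw [hi] at this
        exact (Finset.singleton_injective this).symm
      · rintro rfl
        funext k
        by_cases hk : k = j
        · subst hk
          have hk' : k ∈ (Finset.univ.filter fun i => x i ≠ y i) := by
            rw [hi]; exact mem_singleton_self k
          have hne : x k ≠ y k := (mem_filter.mp hk').2
          have h2 := fin2_ne_eq_add_one (x k) (y k) hne
          rw [h2, flipv, Function.update_self]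
        · have hk' : k ∉ (Finset.univ.filter fun i => x i ≠ y i) := by
            rw [hi]; simpa using hk
          have heq : x k = y k := by
            by_contra hne
            exact hk' (mem_filter.mpr ⟨mem_univ k, hne⟩)
          rw [← heq, flipv, Function.update_of_ne hk]
    rw [if_pos h, hfil]
    simp
  · have hfil : (Finset.univ.filter fun j => y = flipv x j) = ∅ := by
      ext j
      simp only [mem_filter, mem_univ, true_and, Finset.notMem_empty, iff_false]
      intro hj
      rw [hj] at h
      rw [diff_flipv x j] at h
      simp at h
    rw [if_neg h, hfil]
    simp

lemma sum_A_mul_v (i0 : Fin d) (x : Fin d → Fin 2) :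
    ∑ y : Fin d → Fin 2,
      (if (Finset.univ.filter fun i => x i ≠ y i).card = 1 then (1 : ℤ) else 0)
        * (-1 : ℤ) ^ ((y i0 : ℕ))
      = ((d : ℤ) - 2) * (-1 : ℤ) ^ ((x i0 : ℕ)) := by
  have step1 : ∑ y : Fin d → Fin 2,
      (if (Finset.univ.filter fun i => x i ≠ y i).card = 1 then (1 : ℤ) else 0)
        * (-1 : ℤ) ^ ((y i0 : ℕ))
      = ∑ i : Fin d, (-1 : ℤ) ^ (((flipv x i) i0 : ℕ)) := by
    calc ∑ y : Fin d → Fin 2,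
        (if (Finset.univ.filter fun i => x i ≠ y i).card = 1 then (1 : ℤ) else 0)
          * (-1 : ℤ) ^ ((y i0 : ℕ))
        = ∑ y : Fin d → Fin 2, ∑ i : Fin d,
            (if y = flipv x i then (1 : ℤ) else 0) * (-1 : ℤ) ^ ((y i0 : ℕ)) := by
          refine Finset.sum_congr rfl fun y _ => ?_
          rw [A_entry_eq_sum, Finset.sum_mul]
      _ = ∑ i : Fin d, ∑ y : Fin d → Fin 2,
            (if y = flipv x i then (1 : ℤ) else 0) * (-1 : ℤ) ^ ((y i0 : ℕ)) :=
          Finset.sum_comm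
      _ = ∑ i : Fin d, (-1 : ℤ) ^ (((flipv x i) i0 : ℕ)) := by
          refine Finset.sum_congr rfl fun i _ => ?_
          rw [Finset.sum_eq_single (flipv x i)]
          · simp
          · intro y _ hy; rw [if_neg hy, zero_mul]
          · intro h; exact absurd (mem_univ _) h
  rw [step1]
  have hterm : ∀ i : Fin d, (-1 : ℤ) ^ (((flipv x i) i0 : ℕ))
      = if i = i0 then -((-1 : ℤ) ^ ((x i0 : ℕ))) else (-1 : ℤ) ^ ((x i0 : ℕ)) := by
    intro i
    by_cases hi : i = i0
    · subst hi
      rw [if_pos rfl, flipv, Function.update_self, fin2_neg_one_pow_add_one]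
    · rw [if_neg hi, flipv, Function.update_of_ne (Ne.symm hi)]
  simp_rw [hterm]
  have hsplit : ∑ i : Fin d,
      (if i = i0 then -((-1 : ℤ) ^ ((x i0 : ℕ))) else (-1 : ℤ) ^ ((x i0 : ℕ)))
      = (∑ _i : Fin d, (-1 : ℤ) ^ ((x i0 : ℕ)))
        - ∑ i : Fin d, (if i = i0 then 2 * (-1 : ℤ) ^ ((x i0 : ℕ)) else 0) := by
    rw [← Finset.sum_sub_distrib]
    refine Finset.sum_congr rfl fun i _ => ?_
    by_cases hi : i = i0 <;> simp [hi] <;> ring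
  rw [hsplit, Finset.sum_const, Finset.sum_ite_eq' Finset.univ i0
      (fun _ => 2 * (-1 : ℤ) ^ ((x i0 : ℕ))), if_pos (mem_univ i0),
    Finset.card_univ, Fintype.card_fin, nsmul_eq_mul]
  ring

end Aux

/-- For `p` an odd prime, `n ≥ 1`, `d = pⁿ`, and `A` the
adjacency matrix of the hypercube `Q_d`, for every `T ≥ 1` not all entries of
`A^T` are divisible by `d`. -/
theorem hypercube_pow_not_all_dvd (p : ℕ) (hp : p.Prime) (hodd : p ≠ 2)
    (n : ℕ) (hn : 1 ≤ n) (d : ℕ) (hd : d = p ^ n)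
    (A : Matrix (Fin d → Fin 2) (Fin d → Fin 2) ℤ)
    (hA : ∀ x y : Fin d → Fin 2,
      A x y = if (Finset.univ.filter fun i => x i ≠ y i).card = 1 then 1 else 0)
    (T : ℕ) (hT : 1 ≤ T) :
    ∃ x y : Fin d → Fin 2, ¬ (d : ℤ) ∣ (A ^ T) x y := by
  have hd0 : 0 < d := by
    rw [hd]; exact pow_pos hp.pos n
  set i0 : Fin d := ⟨0, hd0⟩ with hi0
  set v : (Fin d → Fin 2) → ℤ := fun x => (-1 : ℤ) ^ ((x i0 : ℕ)) with hv
  -- eigenvector identity iterated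
  have key : ∀ (S : ℕ) (x : Fin d → Fin 2),
      ∑ y : Fin d → Fin 2, (A ^ S) x y * v y = ((d : ℤ) - 2) ^ S * v x := by
    intro S
    induction S with
    | zero =>
      intro x
      simp only [pow_zero, Matrix.one_apply]
      rw [Finset.sum_eq_single x]
      · simp
      · intro y _ hy; rw [if_neg (Ne.symm hy), zero_mul]
      · intro h; exact absurd (mem_univ _) h
    | succ S ih =>
      intro x
      have hmul : ∀ y, (A ^ (S + 1)) x y = ∑ z : Fin d → Fin 2, (A ^ S) x z * A z y := by
        intro y
        rw [pow_succ, Matrix.mul_apply]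
      calc ∑ y : Fin d → Fin 2, (A ^ (S + 1)) x y * v y
          = ∑ y : Fin d → Fin 2, ∑ z : Fin d → Fin 2, (A ^ S) x z * A z y * v y := by
            refine Finset.sum_congr rfl fun y _ => ?_
            rw [hmul, Finset.sum_mul]
        _ = ∑ z : Fin d → Fin 2, (A ^ S) x z * ∑ y : Fin d → Fin 2, A z y * v y := by
            rw [Finset.sum_comm]
            refine Finset.sum_congr rfl fun z _ => ?_
            rw [Finset.mul_sum]
            refine Finset.sum_congr rfl fun y _ => ?_
            ring
        _ = ∑ z : Fin d → Fin 2, (A ^ S) x z * (((d : ℤ) - 2) * v z) := by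
            refine Finset.sum_congr rfl fun z _ => ?_
            congr 1
            have : ∑ y : Fin d → Fin 2, A z y * v y
                = ∑ y : Fin d → Fin 2,
                    (if (Finset.univ.filter fun i => z i ≠ y i).card = 1 then (1 : ℤ) else 0)
                      * (-1 : ℤ) ^ ((y i0 : ℕ)) := by
              refine Finset.sum_congr rfl fun y _ => ?_
              rw [hA]
            rw [this, sum_A_mul_v i0 z]
        _ = ((d : ℤ) - 2) * ∑ z : Fin d → Fin 2, (A ^ S) x z * v z := by
            rw [Finset.mul_sum]
            refine Finset.sum_congr rfl fun z _ => ?_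
            ring
        _ = ((d : ℤ) - 2) ^ (S + 1) * v x := by
            rw [ih x, pow_succ]; ring
  by_contra hcon
  push_neg at hcon
  set x0 : Fin d → Fin 2 := fun _ => 0 with hx0
  have hdvd : (d : ℤ) ∣ ∑ y : Fin d → Fin 2, (A ^ T) x0 y * v y :=
    Finset.dvd_sum fun y _ => Dvd.dvd.mul_right (hcon x0 y) _
  rw [key T x0] at hdvd
  have hvx0 : v x0 = 1 := by simp [hv, hx0]
  rw [hvx0, mul_one] at hdvd
  -- p divides d
  have hpd : (p : ℤ) ∣ (d : ℤ) := by
    rw [hd]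
    exact_mod_cast dvd_pow_self p (Nat.one_le_iff_ne_zero.mp hn)
  have hpdvd : (p : ℤ) ∣ ((d : ℤ) - 2) ^ T := hpd.trans hdvd
  have hpprime : Prime (p : ℤ) := Nat.prime_iff_prime_int.mp hp
  have h1 : (p : ℤ) ∣ ((d : ℤ) - 2) := hpprime.dvd_of_dvd_pow hpdvd
  have h2 : (p : ℤ) ∣ 2 := by
    have := dvd_sub hpd h1
    simpa using this
  have h2' : p ∣ 2 := by exact_mod_cast h2
  exact hodd ((Nat.prime_dvd_prime_iff_eq hp Nat.prime_two).mp h2')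
end
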